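/- Let b be a holomorphic map of the open unit disk 𝔻 ⊂ ℂ into itself, let α ≥ 1 be an integer, and let f : 𝔻 → ℂ. If the kernel (z,w) ↦ ((1 − b(z)·conj(b(w)))/(1 − z·conj(w)))^α − f(z)·conj(f(w)) is positive semidefinite on 𝔻, then the kernel (z,w) ↦ (1 − z·conj(w))^{−α} − f(z)·conj(f(w))·(1 − b(z)·conj(b(w)))^{−α} is positive semidefinite on 𝔻. (This is the kernel form of the estimate ‖M_f C_b‖ ≤ ‖f‖_{A(b,α)} on the weighted Bergman space A²_α.) -/

import Mathlib

open Complex Metric ComplexConjugate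
open scoped ComplexOrder

noncomputable section

/-- A kernel `K : X → X → ℂ` is positive semidefinite on a set `S`: for all finite
families of points of `S` and scalars, the associated quadratic form is a
nonnegative real number (using the partial order on `ℂ`). -/
def IsPSDKernelOn {X : Type*} (K : X → X → ℂ) (S : Set X) : Prop :=
  ∀ (n : ℕ) (x : Fin n → X), (∀ i, x i ∈ S) → ∀ c : Fin n → ℂ,
    0 ≤ ∑ i, ∑ j, c i * conj (c j) * K (x i) (x j)
private lemma kernel_div_aux (A B F C : ℂ) (m : ℕ) (hA : A ≠ 0) (hB : B ≠ 0) :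
    1 / B ^ m * (C * ((B / A) ^ m - F)) = C * ((A ^ m)⁻¹ - F * (B ^ m)⁻¹) := by
  have hA' := pow_ne_zero m hA
  have hB' := pow_ne_zero m hB
  field_simp
  ring_nf
  rw [inv_pow, mul_assoc (C * B ^ m), mul_inv_cancel₀ hA', mul_one]

private lemma cmul_nonneg' {a b : ℂ} (ha : 0 ≤ a) (hb : 0 ≤ b) : 0 ≤ a * b := by
  rw [Complex.nonneg_iff] at *
  constructor
  · simp only [Complex.mul_re, ← ha.2, ← hb.2, mul_zero, zero_mul, sub_zero]
    exact mul_nonneg ha.1 hb.1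
  · simp [Complex.mul_im, ← ha.2, ← hb.2]

/-- Kernel form of `‖M_f C_b‖ ≤ ‖f‖_{A(b,α)}` on the weighted Bergman space
`A²_α` (integer `α ≥ 1`): if `k^{b,α}(z,w) − f(z)·conj(f(w))` is positive
semidefinite, then so is
`(1 − z·conj w)^{−α} − f(z)·conj(f(w))·(1 − b(z)·conj(b(w)))^{−α}`. -/
theorem weighted_composition_kernel_psd_bergman
    (b f : ℂ → ℂ) (α : ℕ) (hα : 1 ≤ α)
    (hb_holo : DifferentiableOn ℂ b (ball (0 : ℂ) 1))
    (hb_maps : ∀ z ∈ ball (0 : ℂ) 1, b z ∈ ball (0 : ℂ) 1)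
    (hpos : IsPSDKernelOn
      (fun z w => ((1 - b z * conj (b w)) / (1 - z * conj w)) ^ α - f z * conj (f w))
      (ball (0 : ℂ) 1)) :
    IsPSDKernelOn
      (fun z w => ((1 - z * conj w) ^ α)⁻¹ -
        f z * conj (f w) * ((1 - b z * conj (b w)) ^ α)⁻¹)
      (ball (0 : ℂ) 1) := by
  intro n x hx c
  obtain ⟨k, rfl⟩ : ∃ k, α = k + 1 := ⟨α - 1, by omega⟩
  set α := k + 1
  have hXn : ∀ i, ‖x i‖ < 1 := fun i => by
    simpa [mem_ball, dist_eq_norm] using hx i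
  have hBn : ∀ i, ‖b (x i)‖ < 1 := fun i => by
    simpa [mem_ball, dist_eq_norm] using hb_maps _ (hx i)
  have hprod : ∀ (g : ℂ → ℂ), (∀ i, ‖g (x i)‖ < 1) → ∀ i j : Fin n,
      ‖g (x i) * conj (g (x j))‖ < 1 := by
    intro g hg i j
    rw [norm_mul, RCLike.norm_conj]
    nlinarith [hg i, hg j, norm_nonneg (g (x i)), norm_nonneg (g (x j))]
  have hXne : ∀ i j : Fin n, (1 : ℂ) - x i * conj (x j) ≠ 0 := by
    intro i j h
    have h1 : ‖x i * conj (x j)‖ < 1 := by simpa using hprod id hXn i j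
    rw [show x i * conj (x j) = 1 by linear_combination -h] at h1
    simp at h1
  have hBne : ∀ i j : Fin n, (1 : ℂ) - b (x i) * conj (b (x j)) ≠ 0 := by
    intro i j h
    have h1 : ‖b (x i) * conj (b (x j))‖ < 1 := by simpa using hprod (fun z => b z) hBn i j
    rw [show b (x i) * conj (b (x j)) = 1 by linear_combination -h] at h1
    simp at h1
  -- per-pair series
  set K1 : Fin n → Fin n → ℂ := fun i j =>
    ((1 - b (x i) * conj (b (x j))) / (1 - x i * conj (x j))) ^ α
      - f (x i) * conj (f (x j)) with hK1
  have key : ∀ i j : Fin n,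
      HasSum (fun m : ℕ => (((m + k).choose k : ℂ) * (b (x i) * conj (b (x j))) ^ m)
          * (c i * conj (c j) * K1 i j))
        (1 / (1 - b (x i) * conj (b (x j))) ^ α * (c i * conj (c j) * K1 i j)) := by
    intro i j
    exact (hasSum_choose_mul_geometric_of_norm_lt_one k
      (hprod (fun z => b z) hBn i j)).mul_right _
  have hsum : HasSum
      (fun m : ℕ => ∑ i, ∑ j, (((m + k).choose k : ℂ) * (b (x i) * conj (b (x j))) ^ m)
          * (c i * conj (c j) * K1 i j))
      (∑ i, ∑ j, 1 / (1 - b (x i) * conj (b (x j))) ^ α * (c i * conj (c j) * K1 i j)) :=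
    hasSum_sum fun i _ => hasSum_sum fun j _ => key i j
  -- identify the limit with the goal quantity
  have hlim : (∑ i, ∑ j, 1 / (1 - b (x i) * conj (b (x j))) ^ α *
        (c i * conj (c j) * K1 i j)) =
      ∑ i, ∑ j, c i * conj (c j) *
        (((1 - x i * conj (x j)) ^ α)⁻¹ -
          f (x i) * conj (f (x j)) * ((1 - b (x i) * conj (b (x j))) ^ α)⁻¹) := by
    refine Finset.sum_congr rfl fun i _ => Finset.sum_congr rfl fun j _ => ?_
    rw [hK1]
    exact kernel_div_aux _ _ _ _ α (hXne i j) (hBne i j)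
  rw [← hlim]
  -- each term of the series is nonneg
  have hterm : ∀ m : ℕ, 0 ≤ ∑ i, ∑ j,
      (((m + k).choose k : ℂ) * (b (x i) * conj (b (x j))) ^ m)
        * (c i * conj (c j) * K1 i j) := by
    intro m
    have h0 := hpos n x hx (fun i => c i * (b (x i)) ^ m)
    simp only at h0
    have hre : (∑ i, ∑ j, (((m + k).choose k : ℂ) * (b (x i) * conj (b (x j))) ^ m)
          * (c i * conj (c j) * K1 i j)) =
        ((m + k).choose k : ℂ) * ∑ i, ∑ j,
          (c i * b (x i) ^ m) * conj (c j * b (x j) ^ m) * K1 i j := by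
      rw [Finset.mul_sum]
      refine Finset.sum_congr rfl fun i _ => ?_
      rw [Finset.mul_sum]
      refine Finset.sum_congr rfl fun j _ => ?_
      rw [map_mul, map_pow, mul_pow]
      ring
    rw [hre]
    refine cmul_nonneg' ?_ h0
    rw [show (((m + k).choose k : ℂ)) = (((m + k).choose k : ℝ) : ℂ) by push_cast; ring,
      Complex.zero_le_real]
    positivity
  -- conclude: limit of nonneg terms is nonneg
  set S := ∑ i, ∑ j, 1 / (1 - b (x i) * conj (b (x j))) ^ α * (c i * conj (c j) * K1 i j)
  have hre : 0 ≤ S.re := by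
    refine hasSum_le (fun m => (Complex.nonneg_iff.mp (hterm m)).1) hasSum_zero
      (Complex.hasSum_re hsum)
  have him : S.im = 0 := by
    have : HasSum (fun m : ℕ => (0 : ℝ)) S.im := by
      have h := Complex.hasSum_im hsum
      refine h.congr_fun fun m => ?_
      exact ((Complex.nonneg_iff.mp (hterm m)).2).symm ▸ rfl
    simpa using this.unique hasSum_zero
  rw [Complex.nonneg_iff]
  exact ⟨hre, him.symm⟩
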